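/- If G is a connected permutation graph with at least one edge, then pb(G) = 1 and, therefore, pl(G) ≤ 2. -/

import Mathlib

open SimpleGraph

variable {V : Type*}

/-- A path-decomposition of `G`: a finite sequence of bags `X 0, …, X (q-1)` such that
every vertex is in some bag, every edge has both ends in some bag, and
`X i ∩ X k ⊆ X j` whenever `i ≤ j ≤ k`. -/
def IsPathDecomp (G : SimpleGraph V) {q : ℕ} (X : Fin q → Set V) : Prop :=
  (∀ v : V, ∃ i, v ∈ X i) ∧
  (∀ u v : V, G.Adj u v → ∃ i, u ∈ X i ∧ v ∈ X i) ∧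
  (∀ i j k : Fin q, i ≤ j → j ≤ k → X i ∩ X k ⊆ X j)

/-- The length of the path-decomposition `X` is at most `l`:
every two vertices in a common bag are at distance at most `l` in `G`. -/
def DecompLengthLE (G : SimpleGraph V) {q : ℕ} (X : Fin q → Set V) (l : ℕ) : Prop :=
  ∀ i, ∀ u ∈ X i, ∀ v ∈ X i, G.dist u v ≤ l

/-- The breadth of the path-decomposition `X` is at most `r`:
every bag is contained in a disk of radius `r` of `G`. -/
def DecompBreadthLE (G : SimpleGraph V) {q : ℕ} (X : Fin q → Set V) (r : ℕ) : Prop :=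
  ∀ i, ∃ c : V, ∀ u ∈ X i, G.dist c u ≤ r

/-- The path-length `pl(G)`: minimum length over all path-decompositions of `G`. -/
noncomputable def pathLength (G : SimpleGraph V) : ℕ :=
  sInf {l | ∃ (q : ℕ) (X : Fin q → Set V), IsPathDecomp G X ∧ DecompLengthLE G X l}

/-- The path-breadth `pb(G)`: minimum breadth over all path-decompositions of `G`. -/
noncomputable def pathBreadth (G : SimpleGraph V) : ℕ :=
  sInf {r | ∃ (q : ℕ) (X : Fin q → Set V), IsPathDecomp G X ∧ DecompBreadthLE G X r}

/-- The path-width `pw(G)`: minimum over all path-decompositions of (max bag size − 1). -/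
noncomputable def pathWidth (G : SimpleGraph V) : ℕ :=
  sInf {w | ∃ (q : ℕ) (X : Fin q → Set V), IsPathDecomp G X ∧ ∀ i, (X i).ncard ≤ w + 1}

/-- `f` is a non-contractive embedding of `G` into the line with distortion at most `k`. -/
def IsLineEmbedding (G : SimpleGraph V) (k : ℕ) (f : V → ℝ) : Prop :=
  ∀ x y : V, (G.dist x y : ℝ) ≤ |f x - f y| ∧ |f x - f y| ≤ (k : ℝ) * (G.dist x y : ℝ)

/-- The minimum line-distortion `ld(G)`. -/
noncomputable def lineDistortion (G : SimpleGraph V) : ℕ :=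
  sInf {k | ∃ f : V → ℝ, IsLineEmbedding G k f}

/-- The bandwidth `bw(G)`: minimum over all layouts (bijections of the vertices
with `{0, …, n-1}`) of the maximum stretch of an edge. -/
noncomputable def bandwidth (G : SimpleGraph V) [Fintype V] : ℕ :=
  sInf {b | ∃ f : V ≃ Fin (Fintype.card V),
    ∀ u v : V, G.Adj u v → Nat.dist (f u : ℕ) (f v : ℕ) ≤ b}

/-- Every path of `G` from `a` to `b` meets the disk of radius `lam` around `c`. -/
def Intercepts (G : SimpleGraph V) (lam : ℕ) (c a b : V) : Prop :=
  ∀ p : G.Walk a b, p.IsPath → ∃ z ∈ p.support, G.dist c z ≤ lam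

/-- The walk `p` avoids the closed neighborhood of `c`. -/
def WalkAvoids (G : SimpleGraph V) {x y : V} (p : G.Walk x y) (c : V) : Prop :=
  ∀ z ∈ p.support, z ≠ c ∧ ¬ G.Adj c z

/-- `a, b, c` form an asteroidal triple of `G`: pairwise non-adjacent, and every two
of them are joined by a path avoiding the closed neighborhood of the third. -/
def IsAsteroidalTriple (G : SimpleGraph V) (a b c : V) : Prop :=
  a ≠ b ∧ a ≠ c ∧ b ≠ c ∧ ¬ G.Adj a b ∧ ¬ G.Adj a c ∧ ¬ G.Adj b c ∧
  (∃ p : G.Walk a b, p.IsPath ∧ WalkAvoids G p c) ∧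
  (∃ p : G.Walk a c, p.IsPath ∧ WalkAvoids G p b) ∧
  (∃ p : G.Walk b c, p.IsPath ∧ WalkAvoids G p a)

/-- `G` is AT-free: it has no asteroidal triple. -/
def ATFree (G : SimpleGraph V) : Prop :=
  ∀ a b c : V, ¬ IsAsteroidalTriple G a b c

/-- `G` is a permutation graph: vertices are segments between two parallel lines,
adjacent iff the segments cross. -/
def IsPermutationGraph (G : SimpleGraph V) : Prop :=
  ∃ a b : V → ℝ, Function.Injective a ∧ Function.Injective b ∧
    ∀ u v : V, u ≠ v → (G.Adj u v ↔ (a u - a v) * (b u - b v) < 0)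


theorem perm_decomp [Fintype V] (G : SimpleGraph V)
    (a b : V → ℝ) (inja : Function.Injective a) (injb : Function.Injective b)
    (hadj : ∀ u v : V, u ≠ v → (G.Adj u v ↔ (a u - a v) * (b u - b v) < 0)) :
    ∃ (q : ℕ) (X : Fin q → Set V),
      ((∀ v : V, ∃ i, v ∈ X i) ∧
       (∀ u v : V, G.Adj u v → ∃ i, u ∈ X i ∧ v ∈ X i) ∧
       (∀ i j k : Fin q, i ≤ j → j ≤ k → X i ∩ X k ⊆ X j)) ∧
      (∀ i, ∃ c : V, ∀ u ∈ X i, u = c ∨ G.Adj c u) := by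
  classical
  set C : Finset V := Finset.univ.filter (fun x => ∀ v : V, a x < a v → b x < b v) with hCdef
  have hmemC : ∀ x : V, x ∈ C ↔ ∀ v : V, a x < a v → b x < b v := by
    intro x; simp [hCdef]
  -- coverage
  have cover : ∀ v : V, ∃ x ∈ C, a v ≤ a x ∧ b x ≤ b v := by
    intro v
    have hvW : v ∈ Finset.univ.filter (fun w => b w ≤ b v) := by simp
    obtain ⟨x, hxW, hmax⟩ := Finset.exists_max_image
      (Finset.univ.filter (fun w : V => b w ≤ b v)) a ⟨v, hvW⟩
    have hbx : b x ≤ b v := (Finset.mem_filter.mp hxW).2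
    refine ⟨x, ?_, hmax v hvW, hbx⟩
    rw [hmemC]
    intro u hu
    by_cases hbu : b u ≤ b v
    · exact absurd (hmax u (by simp [hbu])) (not_le.mpr hu)
    · exact lt_of_le_of_lt hbx (not_le.mp hbu)
  -- sort C by a
  let r : V → V → Prop := fun x y => a x ≤ a y
  haveI : DecidableRel r := Classical.decRel r
  haveI : IsTrans V r := ⟨fun _ _ _ h1 h2 => le_trans h1 h2⟩
  haveI : IsAntisymm V r := ⟨fun _ _ h1 h2 => inja (le_antisymm h1 h2)⟩
  haveI : IsTotal V r := ⟨fun x y => le_total (a x) (a y)⟩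
  set l : List V := C.sort r with hldef
  have hsort : l.Pairwise r := C.pairwise_sort r
  have hmeml : ∀ x : V, x ∈ l ↔ x ∈ C := fun x => Finset.mem_sort r
  have hmono : ∀ i j : Fin l.length, i ≤ j → a (l.get i) ≤ a (l.get j) := by
    intro i j hij
    rcases eq_or_lt_of_le hij with h | h
    · rw [h]
    · exact hsort.rel_get_of_lt h
  have hgetC : ∀ i : Fin l.length, l.get i ∈ C := by
    intro i; rw [← hmeml]; exact l.get_mem i
  -- b-monotone on C
  have hbmono : ∀ x y : V, x ∈ C → a x ≤ a y → b x ≤ b y := by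
    intro x y hx hxy
    rcases eq_or_lt_of_le hxy with h | h
    · rw [inja h]
    · exact le_of_lt ((hmemC x).mp hx y h)
  refine ⟨l.length, fun i => {v | a v ≤ a (l.get i) ∧ b (l.get i) ≤ b v}, ⟨?_, ?_, ?_⟩, ?_⟩
  · -- vertex coverage
    intro v
    obtain ⟨x, hxC, hav, hbv⟩ := cover v
    obtain ⟨i, hi⟩ := List.mem_iff_get.mp ((hmeml x).mpr hxC)
    subst hi
    exact ⟨i, hav, hbv⟩
  · -- edge coverage
    intro u v huv
    have hne := huv.ne
    have hprod := (hadj u v hne).mp huv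
    rcases mul_neg_iff.mp hprod with ⟨h1, h2⟩ | ⟨h1, h2⟩
    · -- a u > a v, b u < b v : v is the "southeast" one? no: a v < a u, b v > b u: u is SE
      obtain ⟨x, hxC, hav, hbv⟩ := cover u
      obtain ⟨i, hi⟩ := List.mem_iff_get.mp ((hmeml x).mpr hxC)
      subst hi
      refine ⟨i, ?_, ?_⟩
      · exact ⟨hav, hbv⟩
      · exact ⟨le_of_lt (lt_of_lt_of_le (by linarith) hav),
          le_trans hbv (by linarith)⟩
    · -- a u < a v, b u > b v : v is SE
      obtain ⟨x, hxC, hav, hbv⟩ := cover v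
      obtain ⟨i, hi⟩ := List.mem_iff_get.mp ((hmeml x).mpr hxC)
      subst hi
      refine ⟨i, ?_, ?_⟩
      · exact ⟨le_of_lt (lt_of_lt_of_le (by linarith) hav),
          le_trans hbv (by linarith)⟩
      · exact ⟨hav, hbv⟩
  · -- consecutiveness
    intro i j k hij hjk v hv
    obtain ⟨⟨hai, hbi⟩, ⟨hak, hbk⟩⟩ := hv
    refine ⟨le_trans hai (hmono i j hij), ?_⟩
    exact le_trans (hbmono (l.get j) (l.get k) (hgetC j) (hmono j k hjk)) hbk
  · -- domination
    intro i
    refine ⟨l.get i, ?_⟩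
    rintro u ⟨hau, hbu⟩
    by_cases hu : u = l.get i
    · exact Or.inl hu
    · refine Or.inr ((hadj (l.get i) u (Ne.symm hu)).mpr ?_)
      have h1 : a u < a (l.get i) := lt_of_le_of_ne hau (fun h => hu (inja h))
      have h2 : b (l.get i) < b u := lt_of_le_of_ne hbu (fun h => hu (injb h).symm)
      have : 0 < a (l.get i) - a u := by linarith
      have : b (l.get i) - b u < 0 := by linarith
      exact mul_neg_of_pos_of_neg (by linarith) (by linarith)

theorem stmt15 [Fintype V] (G : SimpleGraph V) (hG : G.Connected)
    (hperm : IsPermutationGraph G) (hedge : ∃ u v : V, G.Adj u v) :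
    pathBreadth G = 1 ∧ pathLength G ≤ 2 := by
  classical
  obtain ⟨a, b, inja, injb, hadj⟩ := hperm
  obtain ⟨q, X, hdec, hdom⟩ := perm_decomp G a b inja injb hadj
  have hdistle : ∀ {c u : V}, (u = c ∨ G.Adj c u) → G.dist c u ≤ 1 := by
    rintro c u (rfl | h)
    · rw [SimpleGraph.dist_self]; omega
    · exact le_of_eq (SimpleGraph.dist_eq_one_iff_adj.mpr h)
  have hbr : DecompBreadthLE G X 1 := by
    intro i
    obtain ⟨c, hc⟩ := hdom i
    exact ⟨c, fun u hu => hdistle (hc u hu)⟩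
  have h1mem : (1 : ℕ) ∈ {r | ∃ (q : ℕ) (X : Fin q → Set V),
      IsPathDecomp G X ∧ DecompBreadthLE G X r} := ⟨q, X, hdec, hbr⟩
  have hlen : DecompLengthLE G X 2 := by
    intro i u hu v hv
    obtain ⟨c, hc⟩ := hdom i
    have hcu : G.dist c u ≤ 1 := hdistle (hc u hu)
    have hcv : G.dist c v ≤ 1 := hdistle (hc v hv)
    have htri : G.dist u v ≤ G.dist u c + G.dist c v := hG.dist_triangle
    rw [SimpleGraph.dist_comm (u := u) (v := c)] at htri
    omega
  constructor
  · have hle : pathBreadth G ≤ 1 := Nat.sInf_le h1mem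
    have hne0 : pathBreadth G ≠ 0 := by
      intro h0
      rcases Nat.sInf_eq_zero.mp h0 with h0mem | hemp
      · obtain ⟨q0, X0, hdec0, hbr0⟩ := h0mem
        obtain ⟨u, v, huv⟩ := hedge
        obtain ⟨i, hui, hvi⟩ := hdec0.2.1 u v huv
        obtain ⟨c, hc⟩ := hbr0 i
        have h1 : c = u := (hG.dist_eq_zero_iff).mp (Nat.le_zero.mp (hc u hui))
        have h2 : c = v := (hG.dist_eq_zero_iff).mp (Nat.le_zero.mp (hc v hvi))
        exact (G.ne_of_adj huv) (h1 ▸ h2)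
      · rw [hemp] at h1mem
        exact h1mem
    omega
  · exact Nat.sInf_le ⟨q, X, hdec, hlen⟩
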